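/- Let (G,w) be a MinPAC instance with w : A(G) → Q for a set Q = {p_1, …, p_q} ⊆ ℕ, and let X = {v_1, …, v_x} be a vertex cover of the underlying undirected graph of G. Let P_{r_1,…,r_{2x}} (with r_1,…,r_{2x} ∈ [q+1]) be a class of the vertex cover partition containing at least two vertices, and let u ∈ P_{r_1,…,r_{2x}}. Then the induced subgraph G' = G[V(G) \ {u}] is strongly connected and opt((G,w)) = opt((G',w)) + min_{uv ∈ A(G)} w(uv). -/

import Mathlib

/-- A directed graph (given by its arc relation) is strongly connected if every
vertex can reach every other vertex by a directed path. -/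
def StronglyConnected {V : Type*} (A : V → V → Prop) : Prop :=
  ∀ u v : V, Relation.ReflTransGen A u v

open scoped Classical in
/-- The cost paid by a vertex `v` in the subgraph with arcs `B`:
the maximum weight of an outgoing arc of `v` (0 if there is none). -/
noncomputable def vertexCost {V : Type*} [Fintype V] (B : V → V → Prop)
    (w : V → V → ℕ) (v : V) : ℕ :=
  Finset.univ.sup fun u => if B v u then w v u else 0

/-- The total cost of the subgraph with arcs `B`. -/
noncomputable def pacCost {V : Type*} [Fintype V] (B : V → V → Prop)
    (w : V → V → ℕ) : ℕ :=
  ∑ v, vertexCost B w v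

/-- A solution of a MinPAC instance `(A, w)`: a strongly connected spanning
subgraph (given by its arc relation `B`). -/
def IsPACSolution {V : Type*} (A B : V → V → Prop) : Prop :=
  (∀ x y, B x y → A x y) ∧ StronglyConnected B

/-- The optimal cost of a MinPAC instance. -/
noncomputable def pacOpt {V : Type*} [Fintype V] (A : V → V → Prop)
    (w : V → V → ℕ) : ℕ :=
  sInf { c | ∃ B : V → V → Prop, IsPACSolution A B ∧ pacCost B w = c }

section TwinHelpers
open scoped Classical

lemma vertexCost_le' {V : Type*} [Fintype V] {B : V → V → Prop} {w : V → V → ℕ}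
    {v : V} {c : ℕ} (h : ∀ y, B v y → w v y ≤ c) : vertexCost B w v ≤ c := by
  unfold vertexCost
  apply Finset.sup_le
  intro y _
  split_ifs with hb
  · exact h y hb
  · exact Nat.zero_le c

lemma le_vertexCost' {V : Type*} [Fintype V] {B : V → V → Prop} {w : V → V → ℕ}
    {v y : V} (h : B v y) : w v y ≤ vertexCost B w v := by
  unfold vertexCost
  refine le_trans ?_ (Finset.le_sup (Finset.mem_univ y))
  rw [if_pos h]

lemma sum_split' {V : Type*} [Fintype V] [DecidableEq V] (F : V → ℕ) (u : V) :
    ∑ v, F v = F u + ∑ a : {x : V // x ≠ u}, F a.1 := by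
  classical
  rw [← Finset.sum_subtype (p := fun x => x ≠ u) (Finset.univ.erase u) (fun x => by simp) F,
      ← Finset.sum_erase_add Finset.univ F (Finset.mem_univ u)]
  exact Nat.add_comm _ _

lemma entop_if_eq {P Q : Prop} {a b : ℕ}
    (h : (if P then (a : ℕ∞) else ⊤) = (if Q then (b : ℕ∞) else ⊤)) (hp : P) :
    Q ∧ a = b := by
  rw [if_pos hp] at h
  by_cases hq : Q
  · rw [if_pos hq] at h
    exact ⟨hq, by exact_mod_cast h⟩
  · rw [if_neg hq] at h
    exact absurd h (by simp)

end TwinHelpers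

open scoped Classical in
/-- Let `(G, w)` be a MinPAC instance with weights taking values in a set
`Q ⊆ ℕ`, and let `X` be a vertex cover of the underlying undirected graph of `G`.
If some class of the vertex cover partition contains at least two vertices
(`u` and a witness `u'`, i.e. two vertices outside `X` with identical extended
weight profiles `w̄(·, v_i), w̄(v_i, ·)` towards every cover vertex, where
`w̄(xy) = w(xy)` if `xy ∈ A(G)` and `∞` otherwise), then deleting `u` yields a
strongly connected induced subgraph `G'` with
`opt((G, w)) = opt((G', w)) + min_{uv ∈ A(G)} w(uv)`. -/
theorem opt_eq_of_removing_twin_outside_vertex_cover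
    {V : Type*} [Fintype V] [DecidableEq V] (A : V → V → Prop) (w : V → V → ℕ)
    (hG : StronglyConnected A)
    (Q : Finset ℕ) (hwQ : ∀ x y, A x y → w x y ∈ Q)
    (X : Finset V) (hX : ∀ x y, A x y → x ∈ X ∨ y ∈ X)
    (u u' : V) (hne : u ≠ u') (hu : u ∉ X) (hu' : u' ∉ X)
    (hprof : ∀ x ∈ X,
      ((if A u x then (w u x : ℕ∞) else ⊤) = (if A u' x then (w u' x : ℕ∞) else ⊤)) ∧
      ((if A x u then (w x u : ℕ∞) else ⊤) = (if A x u' then (w x u' : ℕ∞) else ⊤))) :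
    StronglyConnected (fun a b : {x : V // x ≠ u} => A a.1 b.1) ∧
    pacOpt A w =
      pacOpt (fun a b : {x : V // x ≠ u} => A a.1 b.1)
          (fun a b : {x : V // x ≠ u} => w a.1 b.1)
        + sInf {c | ∃ x, A u x ∧ w u x = c} := by
  classical
  -- twin transfer lemmas
  have tOut : ∀ y, A u y → A u' y ∧ w u y = w u' y := by
    intro y h
    exact entop_if_eq (hprof y ((hX u y h).resolve_left hu)).1 h
  have tOut' : ∀ y, A u' y → A u y ∧ w u y = w u' y := by
    intro y h
    obtain ⟨h1, h2⟩ := entop_if_eq (hprof y ((hX u' y h).resolve_left hu')).1.symm h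
    exact ⟨h1, h2.symm⟩
  have tIn : ∀ x, A x u → A x u' ∧ w x u = w x u' := by
    intro x h
    exact entop_if_eq (hprof x ((hX x u h).resolve_right hu)).2 h
  have tIn' : ∀ x, A x u' → A x u ∧ w x u = w x u' := by
    intro x h
    obtain ⟨h1, h2⟩ := entop_if_eq (hprof x ((hX x u' h).resolve_right hu')).2.symm h
    exact ⟨h1, h2.symm⟩
  have hAuu : ¬ A u u := fun h => (hX u u h).elim hu hu
  have hAu'u : ¬ A u' u := fun h => (hX u' u h).elim hu' hu
  -- the replacement map
  let f : V → {x : V // x ≠ u} := fun v => if h : v = u then ⟨u', Ne.symm hne⟩ else ⟨v, h⟩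
  have hf : ∀ (v : V) (h : v ≠ u), f v = ⟨v, h⟩ := fun v h => dif_neg h
  have hfu : f u = ⟨u', Ne.symm hne⟩ := dif_pos rfl
  -- strong connectivity of the reduced instance
  have hSC' : StronglyConnected (fun a b : {x : V // x ≠ u} => A a.1 b.1) := by
    have step : ∀ x y, A x y → A (f x).1 (f y).1 := by
      intro x y h
      by_cases hx : x = u <;> by_cases hy : y = u
      · subst hx; subst hy; exact absurd h hAuu
      · subst hx; rw [hfu, hf y hy]; exact (tOut y h).1
      · subst hy; rw [hfu, hf x hx]; exact (tIn x h).1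
      · rw [hf x hx, hf y hy]; exact h
    intro a b
    have key : Relation.ReflTransGen _ (f a.1) (f b.1) := Relation.ReflTransGen.lift
      (p := fun a b : {x : V // x ≠ u} => A a.1 b.1) f step _ _ (hG a.1 b.1)
    rwa [hf a.1 a.2, hf b.1 b.2] at key
  -- the minimum outgoing weight of u
  set A' : {x : V // x ≠ u} → {x : V // x ≠ u} → Prop := fun a b => A a.1 b.1 with hA'def
  set w' : {x : V // x ≠ u} → {x : V // x ≠ u} → ℕ := fun a b => w a.1 b.1 with hw'def
  set S : Set ℕ := {c | ∃ x, A u x ∧ w u x = c} with hSdef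
  have hSne : S.Nonempty := by
    rcases (hG u u').cases_head with heq | ⟨c, hc, -⟩
    · exact absurd heq hne
    · exact ⟨w u c, c, hc, rfl⟩
  set m : ℕ := sInf S with hmdef
  obtain ⟨x₀, hx₀A, hx₀w⟩ : ∃ x, A u x ∧ w u x = m := Nat.sInf_mem hSne
  have hmle : ∀ y, A u y → m ≤ w u y := fun y h => Nat.sInf_le ⟨y, h, rfl⟩
  have hx₀X : x₀ ∈ X := (hX u x₀ hx₀A).resolve_left hu
  have hx₀ne : x₀ ≠ u := fun h => hu (h ▸ hx₀X)
  let u'' : {x : V // x ≠ u} := ⟨u', Ne.symm hne⟩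
  -- ********** Direction ≤ **********
  have exS' : {c | ∃ B : {x : V // x ≠ u} → {x : V // x ≠ u} → Prop,
      IsPACSolution A' B ∧ pacCost B w' = c}.Nonempty :=
    ⟨pacCost A' w', A', ⟨fun _ _ h => h, hSC'⟩, rfl⟩
  obtain ⟨B', hB'sol, hB'cost⟩ := Nat.sInf_mem exS'
  have hB'opt : pacCost B' w' = pacOpt A' w' := hB'cost
  obtain ⟨z', hz'⟩ : ∃ z' : {x : V // x ≠ u}, B' z' u'' := by
    rcases (hB'sol.2 ⟨x₀, hx₀ne⟩ u'').cases_tail with heq | ⟨c, -, hc⟩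
    · exfalso
      have h1 : u' = x₀ := congrArg Subtype.val heq
      exact hu' (h1.symm ▸ hx₀X)
    · exact ⟨c, hc⟩
  have hz'Au' : A z'.1 u' := hB'sol.1 _ _ hz'
  have hz'Au : A z'.1 u := (tIn' z'.1 hz'Au').1
  have hz'w : w z'.1 u = w z'.1 u' := (tIn' z'.1 hz'Au').2
  -- the extended solution B on V
  let B : V → V → Prop := fun x y =>
    (∃ (hx : x ≠ u) (hy : y ≠ u), B' ⟨x, hx⟩ ⟨y, hy⟩) ∨ (x = u ∧ y = x₀) ∨ (x = z'.1 ∧ y = u)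
  have hBcases : ∀ x y, B x y →
      ((∃ (hx : x ≠ u) (hy : y ≠ u), B' ⟨x, hx⟩ ⟨y, hy⟩) ∨ (x = u ∧ y = x₀) ∨
        (x = z'.1 ∧ y = u)) := fun x y h => h
  have hBux₀ : B u x₀ := Or.inr (Or.inl ⟨rfl, rfl⟩)
  have hBzu : B z'.1 u := Or.inr (Or.inr ⟨rfl, rfl⟩)
  have hBof : ∀ a b : {x : V // x ≠ u}, B' a b → B a.1 b.1 := fun a b h =>
    Or.inl ⟨a.2, b.2, h⟩
  have hBsub : ∀ x y, B x y → A x y := by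
    intro x y h
    rcases hBcases x y h with ⟨hx, hy, h⟩ | ⟨rfl, rfl⟩ | ⟨rfl, rfl⟩
    · exact hB'sol.1 _ _ h
    · exact hx₀A
    · exact hz'Au
  have reach_sub : ∀ a b : {x : V // x ≠ u}, Relation.ReflTransGen B a.1 b.1 :=
    fun a b => Relation.ReflTransGen.lift (p := B) Subtype.val
      (fun a b h => hBof a b h) _ _ (hB'sol.2 a b)
  have hBSC : StronglyConnected B := by
    have reach_to_u : ∀ a, Relation.ReflTransGen B a u := by
      intro a
      by_cases ha : a = u
      · subst ha; exact Relation.ReflTransGen.refl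
      · exact (reach_sub ⟨a, ha⟩ z').trans (Relation.ReflTransGen.single hBzu)
    have reach_from_u : ∀ b, Relation.ReflTransGen B u b := by
      intro b
      by_cases hb : b = u
      · subst hb; exact Relation.ReflTransGen.refl
      · exact (Relation.ReflTransGen.single hBux₀).trans
          (reach_sub ⟨x₀, hx₀ne⟩ ⟨b, hb⟩)
    intro a b
    exact (reach_to_u a).trans (reach_from_u b)
  have hvcu : vertexCost B w u = m := by
    apply le_antisymm
    · apply vertexCost_le'
      intro y hy
      rcases hBcases u y hy with ⟨hx, -, -⟩ | ⟨-, rfl⟩ | ⟨hzz, rfl⟩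
      · exact absurd rfl hx
      · exact hx₀w.le
      · exact absurd hzz.symm z'.2
    · calc m = w u x₀ := hx₀w.symm
        _ ≤ _ := le_vertexCost' hBux₀
  have hvc : ∀ a : {x : V // x ≠ u}, vertexCost B w a.1 ≤ vertexCost B' w' a := by
    intro a
    apply vertexCost_le'
    intro y hy
    rcases hBcases a.1 y hy with ⟨hx, hyne, h⟩ | ⟨h1, -⟩ | ⟨h1, rfl⟩
    · exact le_vertexCost' (B := B') (w := w') (v := a) (y := ⟨y, hyne⟩) h
    · exact absurd h1 a.2
    · have ha : a = z' := Subtype.ext h1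
      rw [ha, hz'w]
      exact le_vertexCost' (B := B') (w := w') hz'
  have hle : pacOpt A w ≤ pacOpt A' w' + m := by
    have h1 : pacOpt A w ≤ pacCost B w := Nat.sInf_le ⟨B, ⟨hBsub, hBSC⟩, rfl⟩
    have h2 : pacCost B w ≤ m + pacCost B' w' := by
      have e0 : pacCost B w = vertexCost B w u + ∑ a : {x : V // x ≠ u}, vertexCost B w a.1 :=
        sum_split' (fun v => vertexCost B w v) u
      have h3 : (∑ a : {x : V // x ≠ u}, vertexCost B w a.1) ≤ pacCost B' w' :=
        Finset.sum_le_sum (fun a _ => hvc a)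
      rw [e0, hvcu]
      omega
    calc pacOpt A w ≤ m + pacCost B' w' := h1.trans h2
      _ = pacOpt A' w' + m := by rw [hB'opt, Nat.add_comm]
  -- ********** Direction ≥ **********
  have exS : {c | ∃ B : V → V → Prop, IsPACSolution A B ∧ pacCost B w = c}.Nonempty :=
    ⟨pacCost A w, A, ⟨fun _ _ h => h, hG⟩, rfl⟩
  obtain ⟨C, hCsol, hCcost⟩ := Nat.sInf_mem exS
  have hCopt : pacCost C w = pacOpt A w := hCcost
  let C' : {x : V // x ≠ u} → {x : V // x ≠ u} → Prop := fun a b =>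
    C a.1 b.1 ∨ (a.1 = u' ∧ C u b.1) ∨ (b.1 = u' ∧ C a.1 u)
  have hC'cases : ∀ a b, C' a b →
      (C a.1 b.1 ∨ (a.1 = u' ∧ C u b.1) ∨ (b.1 = u' ∧ C a.1 u)) := fun a b h => h
  have hC'sub : ∀ a b, C' a b → A' a b := by
    intro a b h
    rcases hC'cases a b h with h | ⟨ha, h⟩ | ⟨hb, h⟩
    · exact hCsol.1 _ _ h
    · show A a.1 b.1
      rw [ha]
      exact (tOut b.1 (hCsol.1 _ _ h)).1
    · show A a.1 b.1
      rw [hb]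
      exact (tIn a.1 (hCsol.1 _ _ h)).1
  have hC'SC : StronglyConnected C' := by
    have step : ∀ x y, C x y → C' (f x) (f y) := by
      intro x y h
      by_cases hx : x = u <;> by_cases hy : y = u
      · subst hx; subst hy; exact absurd (hCsol.1 _ _ h) hAuu
      · subst hx
        rw [hfu, hf y hy]
        exact Or.inr (Or.inl ⟨rfl, h⟩)
      · subst hy
        rw [hfu, hf x hx]
        exact Or.inr (Or.inr ⟨rfl, h⟩)
      · rw [hf x hx, hf y hy]
        exact Or.inl h
    intro a b
    have key : Relation.ReflTransGen C' (f a.1) (f b.1) := Relation.ReflTransGen.lift (p := C') f step _ _ (hCsol.2 a.1 b.1)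
    rwa [hf a.1 a.2, hf b.1 b.2] at key
  obtain ⟨y₁, hy₁⟩ : ∃ y, C u y := by
    rcases (hCsol.2 u u').cases_head with heq | ⟨c, hc, -⟩
    · exact absurd heq hne
    · exact ⟨c, hc⟩
  have hm1 : m ≤ vertexCost C w u :=
    (hmle y₁ (hCsol.1 _ _ hy₁)).trans (le_vertexCost' hy₁)
  obtain ⟨y₂, hy₂⟩ : ∃ y, C u' y := by
    rcases (hCsol.2 u' u).cases_head with heq | ⟨c, hc, -⟩
    · exact absurd heq (Ne.symm hne)
    · exact ⟨c, hc⟩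
  have hm2 : m ≤ vertexCost C w u' := by
    have h4 := tOut' y₂ (hCsol.1 _ _ hy₂)
    calc m ≤ w u y₂ := hmle y₂ h4.1
      _ = w u' y₂ := h4.2
      _ ≤ _ := le_vertexCost' hy₂
  have hvc1 : ∀ a : {x : V // x ≠ u}, a.1 ≠ u' →
      vertexCost C' w' a ≤ vertexCost C w a.1 := by
    intro a ha
    apply vertexCost_le'
    intro b hb
    rcases hC'cases a b hb with h | ⟨h1, -⟩ | ⟨h1, h⟩
    · exact le_vertexCost' h
    · exact absurd h1 ha
    · show w a.1 b.1 ≤ _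
      rw [h1, ← (tIn a.1 (hCsol.1 _ _ h)).2]
      exact le_vertexCost' h
  have hvc2 : vertexCost C' w' u'' ≤ max (vertexCost C w u') (vertexCost C w u) := by
    apply vertexCost_le'
    intro b hb
    rcases hC'cases u'' b hb with h | ⟨-, h⟩ | ⟨-, h⟩
    · show w u' b.1 ≤ _
      exact le_trans (le_vertexCost' h) (le_max_left _ _)
    · show w u' b.1 ≤ _
      rw [← (tOut b.1 (hCsol.1 _ _ h)).2]
      exact le_trans (le_vertexCost' h) (le_max_right _ _)
    · exact absurd (hCsol.1 _ _ h) hAu'u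
  have hge : pacOpt A' w' + m ≤ pacOpt A w := by
    have h1 : pacOpt A' w' ≤ pacCost C' w' :=
      Nat.sInf_le ⟨C', ⟨hC'sub, hC'SC⟩, rfl⟩
    have h2 : pacCost C' w' + m ≤ pacCost C w := by
      have e0 : pacCost C w = vertexCost C w u + ∑ a : {x : V // x ≠ u}, vertexCost C w a.1 :=
        sum_split' (fun v => vertexCost C w v) u
      have e1 : pacCost C' w' =
          (∑ a ∈ Finset.univ.erase u'', vertexCost C' w' a) + vertexCost C' w' u'' :=
        (Finset.sum_erase_add _ _ (Finset.mem_univ u'')).symm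
      have e2 : (∑ a : {x : V // x ≠ u}, vertexCost C w a.1) =
          (∑ a ∈ Finset.univ.erase u'', vertexCost C w a.1) + vertexCost C w u' :=
        (Finset.sum_erase_add _ _ (Finset.mem_univ u'')).symm
      have hsum : (∑ a ∈ Finset.univ.erase u'', vertexCost C' w' a) ≤
          ∑ a ∈ Finset.univ.erase u'', vertexCost C w a.1 := by
        apply Finset.sum_le_sum
        intro a ha
        exact hvc1 a (fun hh => (Finset.mem_erase.mp ha).1 (Subtype.ext hh))
      have hmaxmin : vertexCost C' w' u'' + m ≤ vertexCost C w u + vertexCost C w u' := by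
        rcases le_total (vertexCost C w u') (vertexCost C w u) with hc | hc
        · rw [max_eq_right hc] at hvc2; omega
        · rw [max_eq_left hc] at hvc2; omega
      rw [e0, e1, e2]
      omega
    calc pacOpt A' w' + m ≤ pacCost C' w' + m := Nat.add_le_add_right h1 m
      _ ≤ pacCost C w := h2
      _ = pacOpt A w := hCopt
  exact ⟨hSC', le_antisymm hle hge⟩
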